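/- For even n, the map φ_k sending a to diag(iω^k, iω^{−k}) and b to [[0,1],[−1,0]], where ω = exp(πi/n), extends to a group homomorphism from V_{8n} to GL₂(ℂ) for each 1 ≤ k ≤ n−1. -/

import Mathlib

/-- Defining relations of the group
`V_{8n} = ⟨a, b : a^{2n} = b⁴ = 1, ba = a⁻¹b⁻¹, b⁻¹a = a⁻¹b⟩`,
as elements of the free group on two generators. -/
def V8nRels (n : ℕ) : Set (FreeGroup (Fin 2)) :=
  {FreeGroup.of 0 ^ (2 * n), FreeGroup.of 1 ^ 4,
   FreeGroup.of 1 * FreeGroup.of 0 * FreeGroup.of 1 * FreeGroup.of 0,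
   (FreeGroup.of 1)⁻¹ * FreeGroup.of 0 * (FreeGroup.of 1)⁻¹ * FreeGroup.of 0}

/-- The group `V_{8n}` as a presented group. -/
abbrev V8n (n : ℕ) := PresentedGroup (V8nRels n)

/-- The generator `a` of `V_{8n}`. -/
def va (n : ℕ) : V8n n := PresentedGroup.of 0

/-- The generator `b` of `V_{8n}`. -/
def vb (n : ℕ) : V8n n := PresentedGroup.of 1

open Matrix Complex in
theorem stmt_8 (n : ℕ) (hn : 0 < n) (hev : Even n) (k : ℕ) (hk1 : 1 ≤ k) (hk : k ≤ n - 1) :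
    ∃ ρ : V8n n →* GL (Fin 2) ℂ,
      (ρ (va n) : Matrix (Fin 2) (Fin 2) ℂ) =
        !![Complex.I * Complex.exp (Real.pi * Complex.I / n) ^ k, 0;
           0, Complex.I * (Complex.exp (Real.pi * Complex.I / n) ^ k)⁻¹] ∧
      (ρ (vb n) : Matrix (Fin 2) (Fin 2) ℂ) = !![0, 1; -1, 0] := by
  set ω : ℂ := Complex.exp (Real.pi * Complex.I / n) with hω
  set x : ℂ := Complex.I * ω ^ k with hx
  set y : ℂ := Complex.I * (ω ^ k)⁻¹ with hy
  have hωk : ω ^ k ≠ 0 := pow_ne_zero _ (Complex.exp_ne_zero _)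
  have hxy : x * y = -1 := by
    rw [hx, hy, mul_mul_mul_comm, Complex.I_mul_I, mul_inv_cancel₀ hωk, mul_one]
  have hxy' : Complex.I ^ 2 * ω ^ k * ω⁻¹ ^ k = -1 := by
    rw [inv_pow, mul_assoc, mul_inv_cancel₀ hωk, mul_one, Complex.I_sq]
  have hne : (n : ℂ) ≠ 0 := Nat.cast_ne_zero.mpr hn.ne'
  have hω2n : ω ^ (2 * n) = 1 := by
    rw [hω, ← Complex.exp_nat_mul]
    have : (↑(2 * n) : ℂ) * (Real.pi * Complex.I / n) = 2 * Real.pi * Complex.I := by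
      push_cast; field_simp
    rw [this, Complex.exp_two_pi_mul_I]
  have hI2n : Complex.I ^ (2 * n) = 1 := by
    rw [pow_mul, Complex.I_sq, hev.neg_one_pow]
  have hx2n : x ^ (2 * n) = 1 := by
    rw [hx, mul_pow, hI2n, one_mul, ← pow_mul, mul_comm k, pow_mul, hω2n, one_pow]
  have hy2n : y ^ (2 * n) = 1 := by
    rw [hy, mul_pow, hI2n, one_mul, inv_pow, ← pow_mul, mul_comm k, pow_mul, hω2n,
      one_pow, inv_one]
  -- the matrices
  set A : Matrix (Fin 2) (Fin 2) ℂ := !![x, 0; 0, y] with hA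
  set A' : Matrix (Fin 2) (Fin 2) ℂ := !![-y, 0; 0, -x] with hA'
  set B : Matrix (Fin 2) (Fin 2) ℂ := !![0, 1; -1, 0] with hB
  set B' : Matrix (Fin 2) (Fin 2) ℂ := !![0, -1; 1, 0] with hB'
  have hAA' : A * A' = 1 := by
    rw [hA, hA']
    ext i j
    fin_cases i <;> fin_cases j <;>
      simp [Matrix.mul_apply, Fin.sum_univ_succ] <;>
      first
        | linear_combination -hxy
        | linear_combination hxy
        | linear_combination -hxy'
        | linear_combination hxy'
  have hA'A : A' * A = 1 := by
    rw [hA, hA']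
    ext i j
    fin_cases i <;> fin_cases j <;>
      simp [Matrix.mul_apply, Fin.sum_univ_succ] <;>
      first
        | linear_combination -hxy
        | linear_combination hxy
        | linear_combination -hxy'
        | linear_combination hxy'
  have hBB' : B * B' = 1 := by
    rw [hB, hB']
    ext i j
    fin_cases i <;> fin_cases j <;> simp [Matrix.mul_apply, Fin.sum_univ_succ]
  have hB'B : B' * B = 1 := by
    rw [hB, hB']
    ext i j
    fin_cases i <;> fin_cases j <;> simp [Matrix.mul_apply, Fin.sum_univ_succ]
  set uA : GL (Fin 2) ℂ := ⟨A, A', hAA', hA'A⟩ with huA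
  set uB : GL (Fin 2) ℂ := ⟨B, B', hBB', hB'B⟩ with huB
  set f : Fin 2 → GL (Fin 2) ℂ := ![uA, uB] with hf
  have hf0 : FreeGroup.lift f (FreeGroup.of 0) = uA := by simp [hf]
  have hf1 : FreeGroup.lift f (FreeGroup.of 1) = uB := by simp [hf]
  have hApow : A ^ (2 * n) = 1 := by
    have hdiag : A = Matrix.diagonal ![x, y] := by
      rw [hA]; ext i j; fin_cases i <;> fin_cases j <;> simp [Matrix.diagonal]
    rw [hdiag, Matrix.diagonal_pow]
    ext i j
    fin_cases i <;> fin_cases j <;> simp [Matrix.diagonal, hx2n, hy2n]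
  have hB4 : B ^ 4 = 1 := by
    rw [hB]
    ext i j
    rw [show (4 : ℕ) = 2 + 2 from rfl, pow_add, pow_two]
    fin_cases i <;> fin_cases j <;> simp [Matrix.mul_apply, Fin.sum_univ_succ]
  have hBABA : B * A * B * A = 1 := by
    rw [hA, hB]
    ext i j
    fin_cases i <;> fin_cases j <;>
      simp [Matrix.mul_apply, Fin.sum_univ_succ] <;>
      first
        | linear_combination -hxy
        | linear_combination hxy
        | linear_combination -hxy'
        | linear_combination hxy'
        | linear_combination -2 * hxy'
        | linear_combination 2 * hxy'
  have hB'AB'A : B' * A * B' * A = 1 := by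
    rw [hA, hB']
    ext i j
    fin_cases i <;> fin_cases j <;>
      simp [Matrix.mul_apply, Fin.sum_univ_succ] <;>
      first
        | linear_combination -hxy
        | linear_combination hxy
        | linear_combination -hxy'
        | linear_combination hxy'
        | linear_combination -2 * hxy'
        | linear_combination 2 * hxy'
  have hrels : ∀ r ∈ V8nRels n, FreeGroup.lift f r = 1 := by
    intro r hr
    rcases hr with h | h | h | h <;> subst h
    · rw [_root_.map_pow, hf0]
      ext : 1
      simpa [Units.val_pow_eq_pow_val] using hApow
    · rw [_root_.map_pow, hf1]
      ext : 1
      simpa [Units.val_pow_eq_pow_val] using hB4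
    · rw [_root_.map_mul, _root_.map_mul, _root_.map_mul, hf0, hf1]
      ext : 1
      show B * A * B * A = 1
      exact hBABA
    · rw [_root_.map_mul, _root_.map_mul, _root_.map_mul, map_inv, hf0, hf1]
      ext : 1
      show B' * A * B' * A = 1
      exact hB'AB'A
  refine ⟨PresentedGroup.toGroup hrels, ?_, ?_⟩
  · rw [show va n = PresentedGroup.of 0 from rfl, PresentedGroup.toGroup.of]
    show A = _
    rw [hA]
  · rw [show vb n = PresentedGroup.of 1 from rfl, PresentedGroup.toGroup.of]
    show B = _
    rw [hB]
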